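/- arXiv:1812.04489 — 2 statements merged into one kernel-verified Lean document; each statement's English description precedes it below -/
import Mathlib

section
/- For every integer d ≥ 2 and every constant K > 0 there exist c ∈ ℕ and C_1 > 0 with the following property: for every r ∈ ℕ with r > c, every set T ⊂ [0,1)^d with |T| = 2^r and disp(T) < K·2^{−r}, every s ∈ ℕ_0^d with s_1 + … + s_d = r − c, and every trigonometric polynomial f ∈ 𝓣(R(s)), one has C_1·‖f‖_∞ ≤ max_{x ∈ T} |f(2πx)| ≤ ‖f‖_∞. -/
/-- The dispersion of a set T ⊆ [0,1)^d: the supremum of volumes of axis-parallel boxes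
prod_j [x_j, y_j) ⊆ [0,1)^d containing no point of T. -/
noncomputable def disp (d : ℕ) (T : Set (Fin d → ℝ)) : ℝ :=
  sSup {V : ℝ | ∃ x y : Fin d → ℝ,
    (∀ j, 0 ≤ x j ∧ x j ≤ y j ∧ y j ≤ 1) ∧
    (∀ t ∈ T, ∃ j, t j < x j ∨ y j ≤ t j) ∧
    V = ∏ j, (y j - x j)}

/-- R(s) = {k in Z^d : |k_j| < 2^{s_j}, j = 1,...,d}, as a finset. -/
noncomputable def Rbox (d : ℕ) (s : Fin d → ℕ) : Finset (Fin d → ℤ) :=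
  Finset.Icc (fun j => -((2 : ℤ) ^ (s j)) + 1) (fun j => (2 : ℤ) ^ (s j) - 1)

/-- The trigonometric polynomial with frequencies in Q and coefficients c:
f(x) = sum_{k in Q} c_k e^{i(k,x)}. -/
noncomputable def trigPoly (d : ℕ) (Q : Finset (Fin d → ℤ)) (c : (Fin d → ℤ) → ℂ)
    (x : Fin d → ℝ) : ℂ :=
  ∑ k ∈ Q, c k * Complex.exp (Complex.I * ∑ j, (k j : ℂ) * (x j : ℂ))

/-- The uniform norm of f over [0,2π)^d. -/
noncomputable def supNorm (d : ℕ) (f : (Fin d → ℝ) → ℂ) : ℝ :=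
  ⨆ x : ↥(Set.univ.pi fun _ : Fin d => Set.Ico (0 : ℝ) (2 * Real.pi)),
    ‖f (x : Fin d → ℝ)‖

open Complex

lemma expsum_halfplane {ι : Type*} (Q : Finset ι) (b : ι → ℂ) (m : ι → ℤ)
    (hm : ∀ i ∈ Q, 0 ≤ m i) (M : ℝ)
    (hM : ∀ x : ℝ, ‖∑ i ∈ Q, b i * Complex.exp (Complex.I * (m i * x))‖ ≤ M)
    (z : ℂ) (hz : 0 ≤ z.im) :
    ‖∑ i ∈ Q, b i * Complex.exp (Complex.I * (m i * z))‖ ≤ M := by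
  set Φ : ℂ → ℂ := fun q => ∑ i ∈ Q, b i * q ^ (m i).toNat with hΦ
  have key : ∀ w : ℂ, Φ (Complex.exp (Complex.I * w)) =
      ∑ i ∈ Q, b i * Complex.exp (Complex.I * (m i * w)) := by
    intro w
    refine Finset.sum_congr rfl fun i hi => ?_
    rw [← Complex.exp_nat_mul]
    congr 1
    have : ((m i).toNat : ℂ) = (m i : ℂ) := by
      exact_mod_cast congrArg (Int.cast : ℤ → ℂ) (Int.toNat_of_nonneg (hm i hi))
    rw [this]; ring
  have hdiff : Differentiable ℂ Φ := by
    apply Differentiable.fun_sum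
    intro i _
    exact (differentiable_pow _).const_mul _
  have hmem : Complex.exp (Complex.I * z) ∈ closure (Metric.ball (0 : ℂ) 1) := by
    rw [closure_ball (0 : ℂ) one_ne_zero]
    simp only [Metric.mem_closedBall, dist_zero_right, Complex.norm_exp]
    have : (Complex.I * z).re = -z.im := by simp [Complex.mul_re]
    rw [this]
    exact Real.exp_le_one_iff.mpr (by linarith)
  have hfr : ∀ q ∈ frontier (Metric.ball (0:ℂ) 1), ‖Φ q‖ ≤ M := by
    intro q hq
    rw [frontier_ball (0 : ℂ) one_ne_zero] at hq
    simp only [Metric.mem_sphere, dist_zero_right] at hq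
    obtain ⟨θ, hθ⟩ := (Complex.norm_eq_one_iff q).mp hq
    have : q = Complex.exp (Complex.I * θ) := by rw [← hθ, mul_comm]
    rw [this, key]
    exact hM θ
  have := Complex.norm_le_of_forall_mem_frontier_norm_le
    (Metric.isBounded_ball (x := (0:ℂ)) (r := 1)) hdiff.diffContOnCl hfr hmem
  calc ‖∑ i ∈ Q, b i * Complex.exp (Complex.I * (m i * z))‖
      = ‖Φ (Complex.exp (Complex.I * z))‖ := by rw [key]
    _ ≤ M := this

lemma expsum_strip {ι : Type*} (Q : Finset ι) (b : ι → ℂ) (m : ι → ℤ) (n : ℤ)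
    (hm : ∀ i ∈ Q, |m i| ≤ n) (M : ℝ)
    (hM : ∀ x : ℝ, ‖∑ i ∈ Q, b i * Complex.exp (Complex.I * (m i * x))‖ ≤ M)
    (z : ℂ) :
    ‖∑ i ∈ Q, b i * Complex.exp (Complex.I * (m i * z))‖ ≤
      M * Real.exp (n * |z.im|) := by
  -- main case : 0 ≤ z.im, via shift by n
  have main : ∀ (m' : ι → ℤ), (∀ i ∈ Q, |m' i| ≤ n) →
      (∀ x : ℝ, ‖∑ i ∈ Q, b i * Complex.exp (Complex.I * (m' i * x))‖ ≤ M) →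
      ∀ w : ℂ, 0 ≤ w.im →
      ‖∑ i ∈ Q, b i * Complex.exp (Complex.I * (m' i * w))‖ ≤
        M * Real.exp (n * w.im) := by
    intro m' hm' hM' w hw
    have split : ∀ v : ℂ, (∑ i ∈ Q, b i * Complex.exp (Complex.I * (m' i * v))) =
        Complex.exp (-(Complex.I * (n * v))) *
          ∑ i ∈ Q, b i * Complex.exp (Complex.I * ((m' i + n) * v)) := by
      intro v
      rw [Finset.mul_sum]
      refine Finset.sum_congr rfl fun i hi => ?_
      rw [show Complex.exp (-(Complex.I * (n * v))) *
            (b i * Complex.exp (Complex.I * ((m' i + n) * v))) =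
          b i * (Complex.exp (-(Complex.I * (n * v))) *
            Complex.exp (Complex.I * ((m' i + n) * v))) by ring, ← Complex.exp_add]
      congr 2
      push_cast
      ring
    rw [split, norm_mul]
    have h1 : ‖Complex.exp (-(Complex.I * (n * w)))‖ = Real.exp (n * w.im) := by
      rw [Complex.norm_exp]
      congr 1
      simp [Complex.mul_re, Complex.mul_im]
    rw [h1, mul_comm M (Real.exp _)]
    have h2 : ‖∑ i ∈ Q, b i * Complex.exp (Complex.I * ((m' i + n) * w))‖ ≤ M := by
      have := expsum_halfplane Q b (fun i => m' i + n) (fun i hi => ?_) M (fun x => ?_) w hw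
      · convert this using 4 with i hi
        push_cast; ring
      · have h := hm' i hi; rw [abs_le] at h; omega
      · have hs : (∑ i ∈ Q, b i * Complex.exp (Complex.I * ((m' i + n) * (x:ℂ)))) =
            Complex.exp (Complex.I * (n * (x:ℂ))) *
              ∑ i ∈ Q, b i * Complex.exp (Complex.I * (m' i * (x:ℂ))) := by
          rw [split (x : ℂ), ← mul_assoc, ← Complex.exp_add]
          have : Complex.I * (n * (x:ℂ)) + -(Complex.I * (n * (x:ℂ))) = 0 := by ring
          rw [this, Complex.exp_zero, one_mul]
        push_cast
        rw [hs, norm_mul]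
        have habs : ‖Complex.exp (Complex.I * (n * (x:ℂ)))‖ = 1 := by
          rw [Complex.norm_exp]
          simp [Complex.mul_re]
        rw [habs, one_mul]
        exact hM' x
    exact mul_le_mul_of_nonneg_left h2 (Real.exp_nonneg _)
  rcases le_or_gt 0 z.im with hz | hz
  · rw [_root_.abs_of_nonneg hz]
    exact main m hm hM z hz
  · have hsub : ∀ i, Complex.I * ((m i : ℂ) * z) = Complex.I * (((-m i : ℤ) : ℂ) * (-z)) := by
      intro i; push_cast; ring
    have heq : (∑ i ∈ Q, b i * Complex.exp (Complex.I * (m i * z))) =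
        ∑ i ∈ Q, b i * Complex.exp (Complex.I * (((-m i : ℤ) : ℂ) * (-z))) := by
      refine Finset.sum_congr rfl fun i _ => ?_
      rw [hsub i]
    rw [heq]
    have him : (-z).im = |z.im| := by
      rw [_root_.abs_of_neg hz]; simp
    rw [← him]
    refine main (fun i => -m i) (fun i hi => by simpa using hm i hi) (fun x => ?_) (-z)
      (by simp; linarith)
    have heq2 : (∑ i ∈ Q, b i * Complex.exp (Complex.I * (((-m i : ℤ) : ℂ) * (x:ℂ)))) =
        ∑ i ∈ Q, b i * Complex.exp (Complex.I * ((m i : ℂ) * ((-x : ℝ) : ℂ))) := by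
      refine Finset.sum_congr rfl fun i _ => ?_
      push_cast
      ring_nf
    rw [heq2]
    exact hM (-x)

lemma expsum_lipschitz {ι : Type*} (Q : Finset ι) (b : ι → ℂ) (m : ι → ℤ) (n : ℤ)
    (hn : 1 ≤ n) (hm : ∀ i ∈ Q, |m i| ≤ n) (M : ℝ) (hM0 : 0 ≤ M)
    (hM : ∀ x : ℝ, ‖∑ i ∈ Q, b i * Complex.exp (Complex.I * (m i * x))‖ ≤ M)
    (w w' : ℝ) (hww : |w' - w| ≤ 1 / (n : ℝ)) :
    ‖(∑ i ∈ Q, b i * Complex.exp (Complex.I * (m i * w'))) -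
        ∑ i ∈ Q, b i * Complex.exp (Complex.I * (m i * w))‖ ≤ 4 * n * M * |w' - w| := by
  set G : ℂ → ℂ := fun z => ∑ i ∈ Q, b i * Complex.exp (Complex.I * (m i * z)) with hG
  have hGdiff : Differentiable ℂ G := by
    apply Differentiable.fun_sum
    intro i _
    exact ((differentiable_id.const_mul _).const_mul _).cexp.const_mul _
  have hn0 : (0 : ℝ) < (n : ℝ) := by exact_mod_cast hn.trans_lt' (by norm_num)
  have hρ : (0 : ℝ) < 1 / (n : ℝ) := by positivity
  rcases eq_or_ne w' w with rfl | hne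
  · simp
  have hnec : (w' : ℂ) ≠ (w : ℂ) := by exact_mod_cast fun h => hne (Complex.ofReal_injective h)
  set ρ : ℝ := 1 / (n : ℝ) with hρdef
  set F : ℂ → ℂ := dslope G (w : ℂ) with hF
  have hFdiff : Differentiable ℂ F := by
    intro z
    rcases eq_or_ne z (w : ℂ) with rfl | hz
    · obtain ⟨p, hp⟩ := hGdiff.analyticAt (w : ℂ)
      exact (HasFPowerSeriesAt.has_fpower_series_dslope_fslope hp).analyticAt.differentiableAt
    · exact (differentiableAt_dslope_of_ne hz).mpr (hGdiff.differentiableAt)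
  -- bound on sphere
  have hfr : ∀ z ∈ frontier (Metric.ball (w : ℂ) ρ), ‖F z‖ ≤ 4 * n * M := by
    intro z hz
    rw [frontier_ball (w : ℂ) (ne_of_gt hρ)] at hz
    rw [Metric.mem_sphere] at hz
    have hzne : z ≠ (w : ℂ) := by
      intro h; rw [h] at hz; simp [dist_self] at hz; exact (ne_of_gt hρ) hz.symm
    rw [hF, dslope_of_ne _ hzne, slope_def_field]
    have hdist : ‖z - (w : ℂ)‖ = ρ := by
      rw [← Complex.dist_eq]; exact hz
    have him : |z.im| ≤ ρ := by
      have h2 : |(z - (w : ℂ)).im| ≤ ‖z - (w : ℂ)‖ := Complex.abs_im_le_norm _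
      have h3 : (z - (w : ℂ)).im = z.im := by simp [Complex.sub_im, Complex.ofReal_im]
      rw [h3, hdist] at h2
      exact h2
    have hGz : ‖G z‖ ≤ M * Real.exp 1 := by
      have := expsum_strip Q b m n hm M hM z
      refine this.trans (mul_le_mul_of_nonneg_left ?_ hM0)
      rw [Real.exp_le_exp]
      calc (n : ℝ) * |z.im| ≤ (n : ℝ) * ρ := by
            exact mul_le_mul_of_nonneg_left him (le_of_lt hn0)
        _ = 1 := by rw [hρdef, mul_one_div, div_self (ne_of_gt hn0)]
    have hGw : ‖G (w : ℂ)‖ ≤ M := hM w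
    rw [div_eq_mul_inv, norm_mul, norm_inv, hdist]
    have h1 : ‖G z - G (w : ℂ)‖ ≤ M * Real.exp 1 + M := by
      calc ‖G z - G (w : ℂ)‖ ≤ ‖G z‖ + ‖G (w : ℂ)‖ :=
            norm_sub_le _ _
        _ ≤ M * Real.exp 1 + M := add_le_add hGz hGw
    calc ‖G z - G (w : ℂ)‖ * ρ⁻¹ ≤ (M * Real.exp 1 + M) * ρ⁻¹ := by
          exact mul_le_mul_of_nonneg_right h1 (by positivity)
      _ = (Real.exp 1 + 1) * (M * n) := by
          have hinv : ρ⁻¹ = (n : ℝ) := by rw [hρdef, one_div, inv_inv]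
          rw [hinv]; ring
      _ ≤ 4 * (M * n) := by
          have he : Real.exp 1 + 1 ≤ 4 := by
            have := Real.exp_one_lt_d9
            linarith
          exact mul_le_mul_of_nonneg_right he (mul_nonneg hM0 hn0.le)
      _ = 4 * n * M := by ring
  have hmem : (w' : ℂ) ∈ closure (Metric.ball (w : ℂ) ρ) := by
    rw [closure_ball (w : ℂ) (ne_of_gt hρ)]
    rw [Metric.mem_closedBall, Complex.dist_eq]
    have : ‖(w' : ℂ) - (w : ℂ)‖ = |w' - w| := by
      rw [← Complex.ofReal_sub, Complex.norm_real, Real.norm_eq_abs]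
    rw [this]
    exact hww
  have := Complex.norm_le_of_forall_mem_frontier_norm_le Metric.isBounded_ball
    hFdiff.diffContOnCl hfr hmem
  rw [hF, dslope_of_ne _ hnec, slope_def_field, div_eq_mul_inv,
    norm_mul, norm_inv] at this
  have habs : ‖(w' : ℂ) - (w : ℂ)‖ = |w' - w| := by
    rw [← Complex.ofReal_sub, Complex.norm_real, Real.norm_eq_abs]
  rw [habs] at this
  have habspos : (0 : ℝ) < |w' - w| := abs_pos.mpr (sub_ne_zero.mpr hne)
  calc ‖G (w' : ℂ) - G (w : ℂ)‖
      = ‖G (w' : ℂ) - G (w : ℂ)‖ * |w' - w|⁻¹ * |w' - w| := by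
        field_simp
    _ ≤ 4 * n * M * |w' - w| := by
        exact mul_le_mul_of_nonneg_right this (le_of_lt habspos)

lemma trigPoly_slice (d : ℕ) (Q : Finset (Fin d → ℤ)) (c : (Fin d → ℤ) → ℂ)
    (x : Fin d → ℝ) (j : Fin d) (w : ℝ) :
    trigPoly d Q c (Function.update x j w) =
      ∑ k ∈ Q, (c k * Complex.exp (Complex.I * ∑ l ∈ Finset.univ.erase j,
          (k l : ℂ) * (x l : ℂ))) * Complex.exp (Complex.I * ((k j : ℂ) * (w : ℂ))) := by
  unfold trigPoly
  refine Finset.sum_congr rfl fun k _ => ?_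
  have hsum : (∑ l, (k l : ℂ) * ((Function.update x j w) l : ℂ))
      = (∑ l ∈ Finset.univ.erase j, (k l : ℂ) * (x l : ℂ)) + (k j : ℂ) * (w : ℂ) := by
    rw [← Finset.sum_erase_add _ _ (Finset.mem_univ j)]
    congr 1
    · refine Finset.sum_congr rfl fun l hl => ?_
      rw [Function.update_of_ne (Finset.ne_of_mem_erase hl)]
    · rw [Function.update_self]
  rw [hsum, mul_add, Complex.exp_add]
  ring

lemma Rbox_abs_le (d : ℕ) (s : Fin d → ℕ) (k : Fin d → ℤ) (hk : k ∈ Rbox d s) (j : Fin d) :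
    |k j| ≤ 2 ^ (s j) := by
  rw [Rbox, Finset.mem_Icc] at hk
  have h1 := hk.1 j
  have h2 := hk.2 j
  simp only [] at h1 h2
  rw [abs_le]
  omega

lemma trigPoly_update_bound (d : ℕ) (s : Fin d → ℕ) (c : (Fin d → ℤ) → ℂ) (M : ℝ)
    (hM0 : 0 ≤ M)
    (hM : ∀ x : Fin d → ℝ, ‖trigPoly d (Rbox d s) c x‖ ≤ M)
    (x : Fin d → ℝ) (j : Fin d) (w : ℝ) (hw : |w - x j| ≤ 1 / (2 : ℝ) ^ (s j)) :
    ‖trigPoly d (Rbox d s) c (Function.update x j w) -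
        trigPoly d (Rbox d s) c x‖ ≤ 4 * 2 ^ (s j) * M * |w - x j| := by
  set b : (Fin d → ℤ) → ℂ := fun k => c k * Complex.exp (Complex.I * ∑ l ∈ Finset.univ.erase j,
      (k l : ℂ) * (x l : ℂ)) with hb
  have key := expsum_lipschitz (Rbox d s) b (fun k => k j) ((2 : ℤ) ^ (s j))
    (one_le_pow₀ (by norm_num)) (fun k hk => Rbox_abs_le d s k hk j) M hM0
    (fun y => by rw [← trigPoly_slice]; exact hM _) (x j) w
    (by push_cast; exact hw)
  rw [← trigPoly_slice, ← trigPoly_slice] at key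
  rw [Function.update_eq_self] at key
  push_cast at key
  exact key

lemma trigPoly_periodic (d : ℕ) (Q : Finset (Fin d → ℤ)) (c : (Fin d → ℤ) → ℂ)
    (x : Fin d → ℝ) (m : Fin d → ℤ) :
    trigPoly d Q c (fun j => x j + m j * (2 * Real.pi)) = trigPoly d Q c x := by
  unfold trigPoly
  refine Finset.sum_congr rfl fun k _ => ?_
  congr 1
  have hsum : (∑ j, (k j : ℂ) * (((x j + m j * (2 * Real.pi)) : ℝ) : ℂ))
      = (∑ j, (k j : ℂ) * (x j : ℂ)) + ((∑ j, k j * m j : ℤ) : ℂ) * (2 * (Real.pi : ℂ)) := by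
    push_cast
    rw [Finset.sum_mul, ← Finset.sum_add_distrib]
    refine Finset.sum_congr rfl fun j _ => ?_
    ring
  rw [hsum, mul_add, Complex.exp_add]
  have : Complex.I * (((∑ j, k j * m j : ℤ) : ℂ) * (2 * (Real.pi : ℂ)))
      = ((∑ j, k j * m j : ℤ) : ℂ) * (2 * (Real.pi : ℂ) * Complex.I) := by ring
  rw [this, Complex.exp_int_mul_two_pi_mul_I, mul_one]

lemma trigPoly_continuous (d : ℕ) (Q : Finset (Fin d → ℤ)) (c : (Fin d → ℤ) → ℂ) :
    Continuous (trigPoly d Q c) := by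
  unfold trigPoly
  refine continuous_finset_sum _ fun k _ => ?_
  refine continuous_const.mul (Continuous.cexp ?_)
  refine Continuous.mul continuous_const ?_
  refine continuous_finset_sum _ fun j _ => ?_
  exact continuous_const.mul (Complex.continuous_ofReal.comp (continuous_apply j))

/-- reduction to the fundamental domain [0, 2π)^d -/
noncomputable def redmap (d : ℕ) (x : Fin d → ℝ) : Fin d → ℝ :=
  fun j => 2 * Real.pi * Int.fract (x j / (2 * Real.pi))

lemma redmap_mem (d : ℕ) (x : Fin d → ℝ) (j : Fin d) :
    redmap d x j ∈ Set.Ico (0 : ℝ) (2 * Real.pi) := by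
  constructor
  · exact mul_nonneg (by positivity) (Int.fract_nonneg _)
  · have h := Int.fract_lt_one (x j / (2 * Real.pi))
    have h2 : (0 : ℝ) < 2 * Real.pi := Real.two_pi_pos
    calc 2 * Real.pi * Int.fract (x j / (2 * Real.pi)) < 2 * Real.pi * 1 :=
          (mul_lt_mul_iff_right₀ h2).mpr h
      _ = 2 * Real.pi := mul_one _

lemma trigPoly_redmap (d : ℕ) (Q : Finset (Fin d → ℤ)) (c : (Fin d → ℤ) → ℂ)
    (x : Fin d → ℝ) : trigPoly d Q c (redmap d x) = trigPoly d Q c x := by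
  have hx : x = fun j => redmap d x j + (⌊x j / (2 * Real.pi)⌋ : ℤ) * (2 * Real.pi) := by
    funext j
    rw [redmap]
    have h2 : (2 * Real.pi) ≠ 0 := ne_of_gt Real.two_pi_pos
    rw [Int.fract]
    have : 2 * Real.pi * (x j / (2 * Real.pi)) = x j := by field_simp
    linear_combination -this
  conv_rhs => rw [hx]
  exact (trigPoly_periodic d Q c (redmap d x) _).symm

lemma trigPoly_exists_max (d : ℕ) (Q : Finset (Fin d → ℤ)) (c : (Fin d → ℤ) → ℂ) :
    ∃ xm : Fin d → ℝ, (∀ j, xm j ∈ Set.Ico (0 : ℝ) (2 * Real.pi)) ∧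
      ∀ x : Fin d → ℝ,
        ‖trigPoly d Q c x‖ ≤ ‖trigPoly d Q c xm‖ := by
  have hK : IsCompact (Set.univ.pi fun _ : Fin d => Set.Icc (0 : ℝ) (2 * Real.pi)) :=
    isCompact_univ_pi fun _ => isCompact_Icc
  have hne : (Set.univ.pi fun _ : Fin d => Set.Icc (0 : ℝ) (2 * Real.pi)).Nonempty :=
    ⟨fun _ => 0, by
      rw [Set.mem_univ_pi]
      intro j
      exact ⟨le_refl _, le_of_lt Real.two_pi_pos⟩⟩
  have hcont : Continuous fun x => ‖trigPoly d Q c x‖ :=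
    continuous_norm.comp (trigPoly_continuous d Q c)
  obtain ⟨xm, hxmK, hmax⟩ := hK.exists_isMaxOn hne hcont.continuousOn
  refine ⟨redmap d xm, fun j => redmap_mem d xm j, fun x => ?_⟩
  have h1 : trigPoly d Q c (redmap d xm) = trigPoly d Q c xm := trigPoly_redmap d Q c xm
  rw [h1, ← trigPoly_redmap d Q c x]
  refine hmax ?_
  rw [Set.mem_univ_pi]
  intro j
  have := redmap_mem d x j
  exact ⟨this.1, le_of_lt this.2⟩

lemma trigPoly_telescope (d : ℕ) (s : Fin d → ℕ) (c : (Fin d → ℤ) → ℂ) (M : ℝ)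
    (hM0 : 0 ≤ M)
    (hM : ∀ x : Fin d → ℝ, ‖trigPoly d (Rbox d s) c x‖ ≤ M)
    (x y : Fin d → ℝ) (η : Fin d → ℝ) (hη0 : ∀ j, 0 ≤ η j)
    (hη : ∀ j, |y j - x j| ≤ η j) (hη2 : ∀ j, η j ≤ 1 / (2 : ℝ) ^ (s j)) :
    ‖trigPoly d (Rbox d s) c y - trigPoly d (Rbox d s) c x‖ ≤
      ∑ j, 4 * 2 ^ (s j) * M * η j := by
  set f := trigPoly d (Rbox d s) c with hf
  set z : ℕ → (Fin d → ℝ) := fun m => fun l => if (l : ℕ) < m then y l else x l with hz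
  have hz0 : z 0 = x := by funext l; simp [hz]
  have hzd : z d = y := by funext l; simp [hz, l.isLt]
  set G : ℕ → ℝ := fun m => if h : m < d then 4 * 2 ^ (s ⟨m, h⟩) * M * η ⟨m, h⟩ else 0
    with hG
  have step : ∀ m ∈ Finset.range d, ‖f (z (m + 1)) - f (z m)‖ ≤ G m := by
    intro m hm
    rw [Finset.mem_range] at hm
    set j : Fin d := ⟨m, hm⟩ with hj
    have hupd : z (m + 1) = Function.update (z m) j (y j) := by
      funext l
      rcases eq_or_ne l j with rfl | hlj
      · rw [Function.update_self]
        simp [hz, hj]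
      · rw [Function.update_of_ne hlj]
        have : (l : ℕ) ≠ m := fun h => hlj (Fin.ext h)
        simp only [hz]
        by_cases hlm : (l : ℕ) < m
        · rw [if_pos hlm, if_pos (by omega)]
        · rw [if_neg hlm, if_neg (by omega)]
    have hzmj : (z m) j = x j := by simp [hz, hj]
    have hb := trigPoly_update_bound d s c M hM0 hM (z m) j (y j)
      (by rw [hzmj]; exact (hη j).trans (hη2 j))
    rw [hupd]
    simp only [hG, dif_pos hm]
    rw [hzmj] at hb
    refine hb.trans ?_
    exact mul_le_mul_of_nonneg_left (hη j) (by positivity)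
  have tele : f (z d) - f (z 0) = ∑ m ∈ Finset.range d, (f (z (m + 1)) - f (z m)) :=
    (Finset.sum_range_sub (fun m => f (z m)) d).symm
  have habs : ‖f y - f x‖ ≤ ∑ m ∈ Finset.range d, G m := by
    rw [← hz0, ← hzd, tele]
    refine (norm_sum_le _ _).trans ?_
    exact Finset.sum_le_sum step
  refine habs.trans ?_
  rw [← Fin.sum_univ_eq_sum_range G d]
  refine le_of_eq (Finset.sum_congr rfl fun j _ => ?_)
  simp only [hG, dif_pos j.isLt, Fin.eta]

lemma exists_point_in_box (d : ℕ) (T : Finset (Fin d → ℝ)) (a δ : Fin d → ℝ)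
    (ha : ∀ j, 0 ≤ a j ∧ 0 ≤ δ j ∧ a j + δ j ≤ 1)
    (hdisp : disp d ↑T < ∏ j, δ j) :
    ∃ t ∈ T, ∀ j, a j ≤ t j ∧ t j < a j + δ j := by
  by_contra hcon
  push_neg at hcon
  have hmem : (∏ j, δ j) ∈ {V : ℝ | ∃ x y : Fin d → ℝ,
      (∀ j, 0 ≤ x j ∧ x j ≤ y j ∧ y j ≤ 1) ∧
      (∀ t ∈ (↑T : Set (Fin d → ℝ)), ∃ j, t j < x j ∨ y j ≤ t j) ∧
      V = ∏ j, (y j - x j)} := by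
    refine ⟨a, fun j => a j + δ j,
      fun j => ⟨(ha j).1, le_add_of_nonneg_right (ha j).2.1, (ha j).2.2⟩, ?_, by simp⟩
    intro t ht
    rw [Finset.mem_coe] at ht
    obtain ⟨j, hj⟩ := hcon t ht
    rcases le_or_gt (a j) (t j) with h1 | h1
    · exact ⟨j, Or.inr (hj h1)⟩
    · exact ⟨j, Or.inl h1⟩
  have hbdd : BddAbove {V : ℝ | ∃ x y : Fin d → ℝ,
      (∀ j, 0 ≤ x j ∧ x j ≤ y j ∧ y j ≤ 1) ∧
      (∀ t ∈ (↑T : Set (Fin d → ℝ)), ∃ j, t j < x j ∨ y j ≤ t j) ∧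
      V = ∏ j, (y j - x j)} := by
    refine ⟨1, fun V hV => ?_⟩
    obtain ⟨x, y, hxy, -, rfl⟩ := hV
    refine Finset.prod_le_one (fun j _ => by linarith [(hxy j).1, (hxy j).2.1])
      (fun j _ => by linarith [(hxy j).1, (hxy j).2.1, (hxy j).2.2])
  have := le_csSup hbdd hmem
  rw [disp] at hdisp
  linarith

/-- (Temlyakov) For every d >= 2 and every K > 0 there exist c in N and C_1 > 0 such that:
for every r > c, every T ⊆ [0,1)^d with |T| = 2^r and disp(T) < K 2^{-r}, every s in N_0^d
with s_1 + ... + s_d = r - c, and every f in T(R(s)), one has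
C_1 ||f||_inf <= max_{x in T} |f(2πx)| <= ||f||_inf. -/
theorem statement15 :
    ∀ d : ℕ, 2 ≤ d → ∀ K : ℝ, 0 < K → ∃ c : ℕ, ∃ C1 : ℝ, 0 < C1 ∧
      ∀ r : ℕ, c < r → ∀ T : Finset (Fin d → ℝ),
        (∀ t ∈ T, ∀ j, t j ∈ Set.Ico (0 : ℝ) 1) →
        T.card = 2 ^ r → disp d ↑T < K / 2 ^ r →
        ∀ s : Fin d → ℕ, (∑ j, s j) = r - c →
        ∀ coef : (Fin d → ℤ) → ℂ,
          C1 * supNorm d (trigPoly d (Rbox d s) coef) ≤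
            (⨆ t : T, ‖
              (trigPoly d (Rbox d s) coef (fun j => 2 * Real.pi * (t : Fin d → ℝ) j))‖) ∧
          (⨆ t : T, ‖
              (trigPoly d (Rbox d s) coef (fun j => 2 * Real.pi * (t : Fin d → ℝ) j))‖) ≤
            supNorm d (trigPoly d (Rbox d s) coef) := by
  intro d hd K hK
  have hπ := Real.pi_pos
  obtain ⟨c, hc⟩ := pow_unbounded_of_one_lt (K * (16 * Real.pi * d) ^ d)
    (by norm_num : (1 : ℝ) < 2)
  refine ⟨c, 1/2, by norm_num, ?_⟩
  intro r hr T hT01 hcard hdisp s hs coef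
  have hd0 : (0 : ℝ) < d := by
    have : (2 : ℝ) ≤ d := by exact_mod_cast hd
    linarith
  set f := trigPoly d (Rbox d s) coef with hf
  obtain ⟨xm, hxm, hmax⟩ := trigPoly_exists_max d (Rbox d s) coef
  set M := ‖f xm‖ with hM
  have hM0 : 0 ≤ M := norm_nonneg _
  haveI hne1 : Nonempty ↥(Set.univ.pi fun _ : Fin d => Set.Ico (0 : ℝ) (2 * Real.pi)) :=
    ⟨⟨fun _ => 0, by
      rw [Set.mem_univ_pi]
      intro j
      exact ⟨le_refl _, Real.two_pi_pos⟩⟩⟩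
  have hTne : T.Nonempty := Finset.card_pos.mp (by rw [hcard]; positivity)
  haveI hne2 : Nonempty ↥T := ⟨⟨hTne.choose, hTne.choose_spec⟩⟩
  have hsup_le : supNorm d f ≤ M := ciSup_le fun x => hmax _
  have hbdd_sup : BddAbove (Set.range fun x : ↥(Set.univ.pi fun _ : Fin d =>
      Set.Ico (0 : ℝ) (2 * Real.pi)) => ‖f (x : Fin d → ℝ)‖) :=
    ⟨M, by rintro v ⟨x, rfl⟩; exact hmax _⟩
  have hbdd_T : BddAbove (Set.range fun t : ↥T =>
      ‖f fun j => 2 * Real.pi * (t : Fin d → ℝ) j‖) :=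
    ⟨M, by rintro v ⟨t, rfl⟩; exact hmax _⟩
  have easy : (⨆ t : ↥T, ‖f fun j => 2 * Real.pi * (t : Fin d → ℝ) j‖) ≤
      supNorm d f := by
    refine ciSup_le fun t => ?_
    have hmem : (fun j => 2 * Real.pi * (t : Fin d → ℝ) j) ∈
        Set.univ.pi fun _ : Fin d => Set.Ico (0 : ℝ) (2 * Real.pi) := by
      rw [Set.mem_univ_pi]
      intro j
      obtain ⟨h1, h2⟩ := hT01 t t.2 j
      constructor
      · positivity
      · calc 2 * Real.pi * (t : Fin d → ℝ) j < 2 * Real.pi * 1 :=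
              (mul_lt_mul_iff_right₀ Real.two_pi_pos).mpr h2
          _ = 2 * Real.pi := mul_one _
    exact le_ciSup hbdd_sup (⟨_, hmem⟩ : ↥(Set.univ.pi fun _ : Fin d =>
      Set.Ico (0 : ℝ) (2 * Real.pi)))
  -- the box
  set δ : Fin d → ℝ := fun j => 1 / (16 * Real.pi * d * 2 ^ (s j)) with hδ
  have hδpos : ∀ j, 0 < δ j := fun j => by rw [hδ]; positivity
  have hd2 : (2 : ℝ) ≤ d := by exact_mod_cast hd
  have hπd : (3 : ℝ) * 2 ≤ Real.pi * d :=
    mul_le_mul Real.pi_gt_three.le hd2 (by norm_num) Real.pi_pos.le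
  have h16 : (1 : ℝ) ≤ 16 * Real.pi * d := by linarith
  have hδ1 : ∀ j, δ j ≤ 1 := by
    intro j
    simp only [hδ]
    rw [div_le_one (by positivity)]
    have h2 : (1 : ℝ) ≤ 2 ^ (s j) := one_le_pow₀ (by norm_num)
    nlinarith [h16, h2]
  set η : Fin d → ℝ := fun j => 2 * Real.pi * δ j with hη
  have hηpos : ∀ j, 0 ≤ η j := fun j => by rw [hη]; positivity
  have hηle : ∀ j, η j ≤ 1 / (2 : ℝ) ^ (s j) := by
    intro j
    simp only [hη, hδ]
    have heq : 2 * Real.pi * (1 / (16 * Real.pi * (d : ℝ) * 2 ^ (s j))) =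
        1 / (8 * (d : ℝ) * 2 ^ (s j)) := by
      field_simp
      ring
    rw [heq]
    refine one_div_le_one_div_of_le (by positivity) ?_
    nlinarith [pow_pos (by norm_num : (0:ℝ) < 2) (s j)]
  have hprod : (∏ j, δ j) = 1 / ((16 * Real.pi * d) ^ d * 2 ^ (r - c)) := by
    simp only [hδ, one_div]
    rw [Finset.prod_inv_distrib]
    congr 1
    rw [Finset.prod_mul_distrib, Finset.prod_const, Finset.card_univ, Fintype.card_fin,
      Finset.prod_pow_eq_pow_sum, hs]
  have hvol : K / 2 ^ r ≤ ∏ j, δ j := by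
    rw [hprod]
    rw [div_le_div_iff₀ (by positivity) (by positivity)]
    have h2r : (2 : ℝ) ^ r = 2 ^ (r - c) * 2 ^ c := by
      rw [← pow_add, Nat.sub_add_cancel (le_of_lt hr)]
    calc K * ((16 * Real.pi * d) ^ d * 2 ^ (r - c))
        = (K * (16 * Real.pi * d) ^ d) * 2 ^ (r - c) := by ring
      _ ≤ 2 ^ c * 2 ^ (r - c) := mul_le_mul_of_nonneg_right hc.le (by positivity)
      _ = 1 * 2 ^ r := by rw [h2r]; ring
  set u : Fin d → ℝ := fun j => xm j / (2 * Real.pi) with hu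
  set a : Fin d → ℝ := fun j => min (u j) (1 - δ j) with ha
  have hbox : ∀ j, 0 ≤ a j ∧ 0 ≤ δ j ∧ a j + δ j ≤ 1 := by
    intro j
    have h0u : (0 : ℝ) ≤ u j := div_nonneg (hxm j).1 (by positivity)
    refine ⟨le_min h0u (by linarith [hδ1 j]), (hδpos j).le, ?_⟩
    have : a j ≤ 1 - δ j := min_le_right _ _
    linarith
  obtain ⟨t₀, ht₀T, ht₀⟩ := exists_point_in_box d T a δ hbox (lt_of_lt_of_le hdisp hvol)
  have hclose : ∀ j, |2 * Real.pi * t₀ j - xm j| ≤ η j := by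
    intro j
    have h1 := (ht₀ j).1
    have h2 := (ht₀ j).2
    have huj : a j ≤ u j ∧ u j ≤ a j + δ j := by
      refine ⟨min_le_left _ _, ?_⟩
      rcases le_or_gt (u j) (1 - δ j) with h | h
      · simp only [ha]; rw [min_eq_left h]; linarith [(hδpos j).le]
      · simp only [ha]; rw [min_eq_right h.le]
        have hu1 : u j < 1 := by
          simp only [hu]
          rw [div_lt_one Real.two_pi_pos]
          exact (hxm j).2
        linarith
    have htu : |t₀ j - u j| ≤ δ j := abs_le.mpr ⟨by linarith [huj.1, huj.2], by linarith [huj.1, huj.2]⟩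
    have hxmu : xm j = 2 * Real.pi * u j := by
      simp only [hu]; field_simp
    calc |2 * Real.pi * t₀ j - xm j| = 2 * Real.pi * |t₀ j - u j| := by
          rw [hxmu, ← mul_sub, abs_mul, abs_of_pos Real.two_pi_pos]
      _ ≤ 2 * Real.pi * δ j := by
          exact mul_le_mul_of_nonneg_left htu (le_of_lt Real.two_pi_pos)
      _ = η j := by simp only [hη]
  have htele := trigPoly_telescope d s coef M hM0 hmax xm (fun j => 2 * Real.pi * t₀ j) η
    hηpos (fun j => hclose j) hηle
  have hsum : (∑ j, 4 * 2 ^ (s j) * M * η j) = M / 2 := by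
    have hterm : ∀ j, 4 * 2 ^ (s j) * M * η j = M / (2 * d) := by
      intro j
      simp only [hη, hδ]
      field_simp
      ring
    rw [Finset.sum_congr rfl fun j _ => hterm j, Finset.sum_const, Finset.card_univ,
      Fintype.card_fin, nsmul_eq_mul]
    field_simp
  rw [hsum] at htele
  have hlow : M / 2 ≤ ‖f fun j => 2 * Real.pi * t₀ j‖ := by
    set y : Fin d → ℝ := fun j => 2 * Real.pi * t₀ j with hy
    have h3 : ‖f xm‖ ≤ ‖f y‖ + ‖f y - f xm‖ := by
      calc ‖f xm‖ = ‖f y - (f y - f xm)‖ := by congr 1; ring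
        _ ≤ ‖f y‖ + ‖f y - f xm‖ := norm_sub_le _ _
    have : ‖f y - f xm‖ ≤ M / 2 := htele
    have hMy : M ≤ ‖f y‖ + M / 2 := by
      rw [hM]
      linarith
    linarith
  refine ⟨?_, easy⟩
  calc (1/2) * supNorm d f ≤ (1/2) * M := by linarith [hsup_le]
    _ = M / 2 := by ring
    _ ≤ ‖f fun j => 2 * Real.pi * t₀ j‖ := hlow
    _ ≤ ⨆ t : ↥T, ‖f fun j => 2 * Real.pi * (t : Fin d → ℝ) j‖ :=
        le_ciSup hbdd_T (⟨t₀, ht₀T⟩ : ↥T)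
end

section
/- For every integer d ≥ 2 and every constant C_1 > 0 there exists a constant C > 0 with the following property: if n ∈ ℕ and T ⊂ [0,1)^d is a finite set such that for every s ∈ ℕ_0^d with s_1 + … + s_d = n and every trigonometric polynomial f ∈ 𝓣(R(s)) one has C_1·‖f‖_∞ ≤ max_{x ∈ T} |f(2πx)|, then disp(T) ≤ C·2^{−n}. -/
noncomputable def Dir (N : ℕ) (u : ℝ) : ℂ :=
  ∑ m ∈ Finset.Icc (-(N:ℤ)+1) ((N:ℤ)-1), Complex.exp (Complex.I * m * u)

lemma Rbox_eq (d : ℕ) (s : Fin d → ℕ) :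
    Rbox d s = Fintype.piFinset (fun j => Finset.Icc (-(((2:ℕ)^(s j) : ℕ) : ℤ)+1) ((((2:ℕ)^(s j) : ℕ):ℤ)-1)) := by
  ext k
  simp only [Rbox, Finset.mem_Icc, Fintype.mem_piFinset, Pi.le_def]
  push_cast
  constructor
  · rintro ⟨h1, h2⟩ j; exact ⟨h1 j, h2 j⟩
  · intro h; exact ⟨fun j => (h j).1, fun j => (h j).2⟩

lemma trigPoly_eq (d : ℕ) (s : Fin d → ℕ) (θ : Fin d → ℝ) (z : Fin d → ℝ) :
    trigPoly d (Rbox d s) (fun k => ∏ j, Complex.exp (-Complex.I * (k j) * (θ j))) z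
      = ∏ j, Dir ((2:ℕ)^(s j)) (z j - θ j) := by
  unfold trigPoly Dir
  rw [Rbox_eq]
  have hterm : ∀ k ∈ Fintype.piFinset (fun j => Finset.Icc (-(((2:ℕ)^(s j) : ℕ) : ℤ)+1) ((((2:ℕ)^(s j) : ℕ):ℤ)-1)),
      (∏ j, Complex.exp (-Complex.I * (k j) * (θ j))) * Complex.exp (Complex.I * ∑ j, ((k j : ℂ)) * ((z j : ℂ)))
        = ∏ j, Complex.exp (Complex.I * (k j) * ((z j - θ j : ℝ) : ℂ)) := by
    intro k _
    rw [Finset.mul_sum, Complex.exp_sum, ← Finset.prod_mul_distrib]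
    apply Finset.prod_congr rfl
    intro j _
    rw [← Complex.exp_add]
    congr 1
    push_cast
    ring
  rw [Finset.sum_congr rfl hterm]
  exact (Finset.prod_univ_sum (fun j => Finset.Icc (-(((2:ℕ)^(s j) : ℕ) : ℤ)+1) ((((2:ℕ)^(s j) : ℕ):ℤ)-1))
    (fun j m => Complex.exp (Complex.I * m * ((z j - θ j : ℝ) : ℂ)))).symm

lemma trigPoly_abs_le (d : ℕ) (Q : Finset (Fin d → ℤ)) (coef : (Fin d → ℤ) → ℂ) (z : Fin d → ℝ) :
    ‖trigPoly d Q coef z‖ ≤ ∑ k ∈ Q, ‖coef k‖ := by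
  unfold trigPoly
  refine le_trans (norm_sum_le _ _) ?_
  apply Finset.sum_le_sum
  intro k _
  rw [norm_mul]
  have h : (Complex.I * ∑ j, ((k j : ℂ)) * ((z j : ℂ))).re = 0 := by
    have h2 : (∑ j, ((k j : ℂ)) * ((z j : ℂ))) = (((∑ j, (k j : ℝ) * z j : ℝ)) : ℂ) := by
      push_cast; ring
    rw [h2]
    simp
  rw [Complex.norm_exp, h, Real.exp_zero, mul_one]

lemma icc_card (N : ℕ) (hN : 1 ≤ N) :
    (Finset.Icc (-(N:ℤ)+1) ((N:ℤ)-1)).card = 2*N - 1 := by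
  rw [Int.card_Icc]
  omega

lemma dir_zero (N : ℕ) (hN : 1 ≤ N) : Dir N 0 = ((2*N - 1 : ℕ) : ℂ) := by
  unfold Dir
  simp [icc_card N hN]

lemma dir_abs_le (N : ℕ) (hN : 1 ≤ N) (u : ℝ) :
    ‖Dir N u‖ ≤ ((2*N - 1 : ℕ) : ℝ) := by
  unfold Dir
  calc ‖∑ m ∈ Finset.Icc (-(N:ℤ)+1) ((N:ℤ)-1), Complex.exp (Complex.I * m * u)‖
      ≤ ∑ m ∈ Finset.Icc (-(N:ℤ)+1) ((N:ℤ)-1), ‖Complex.exp (Complex.I * m * u)‖ :=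
        norm_sum_le _ _
    _ = ∑ m ∈ Finset.Icc (-(N:ℤ)+1) ((N:ℤ)-1), 1 := by
        apply Finset.sum_congr rfl
        intro m _
        rw [Complex.norm_exp]
        norm_num
    _ = ((2*N - 1 : ℕ) : ℝ) := by simp [icc_card N hN]

lemma dir_geom (N : ℕ) (u : ℝ) :
    Dir N u = Complex.exp (Complex.I * (-(N:ℤ)+1) * u) *
      ∑ r ∈ Finset.range (2*N-1), (Complex.exp (Complex.I * u)) ^ r := by
  unfold Dir
  rw [Finset.mul_sum]
  apply Finset.sum_nbij' (i := fun m => (m + (N:ℤ) - 1).toNat) (j := fun r => (r:ℤ) - (N:ℤ) + 1)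
  · intro m hm; simp only [Finset.mem_Icc] at hm; simp only [Finset.mem_range]; omega
  · intro r hr; simp only [Finset.mem_range] at hr; simp only [Finset.mem_Icc]; omega
  · intro m hm; simp only [Finset.mem_Icc] at hm; omega
  · intro r hr; simp only [Finset.mem_range] at hr; omega
  · intro m hm
    simp only [Finset.mem_Icc] at hm
    rw [← Complex.exp_nat_mul, ← Complex.exp_add]
    congr 1
    have : ((m + (N:ℤ) - 1).toNat : ℂ) = ((m + (N:ℤ) - 1 : ℤ) : ℂ) := by
      norm_cast; omega
    rw [this]
    push_cast
    ring

lemma dir_decay (N : ℕ) (u : ℝ) (hz : Complex.exp (Complex.I * u) ≠ 1) :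
    ‖Dir N u‖ ≤ 2 / ‖Complex.exp (Complex.I * u) - 1‖ := by
  rw [dir_geom, norm_mul, Complex.norm_exp]
  have h1 : Real.exp ((Complex.I * (-(N:ℤ)+1) * u).re) = 1 := by norm_num
  rw [h1, one_mul, geom_sum_eq hz, norm_div]
  gcongr
  refine le_trans (norm_sub_le _ 1) ?_
  rw [norm_pow, Complex.norm_exp]
  norm_num

lemma abs_exp_sub_one (u : ℝ) :
    ‖Complex.exp (Complex.I * u) - 1‖ = 2 * |Real.sin (u/2)| := by
  have h : ‖Complex.exp (Complex.I * u) - 1‖ ^ 2 = (2 * |Real.sin (u/2)|) ^ 2 := by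
    rw [Complex.sq_norm, mul_comm Complex.I (u:ℂ), Complex.exp_mul_I]
    rw [Complex.normSq_apply]
    simp only [Complex.add_re, Complex.add_im, Complex.sub_re, Complex.sub_im,
      Complex.one_re, Complex.one_im, Complex.mul_re, Complex.mul_im,
      Complex.I_re, Complex.I_im, Complex.cos_ofReal_re, Complex.sin_ofReal_re,
      Complex.cos_ofReal_im, Complex.sin_ofReal_im]
    have hs : Real.sin (u/2) ^ 2 = (1 - Real.cos u) / 2 := by
      have := Real.sin_sq_eq_half_sub (u/2)
      rw [show 2 * (u/2) = u by ring] at this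
      linarith
    have hc : Real.cos u ^ 2 + Real.sin u ^ 2 = 1 := by
      rw [add_comm]; exact Real.sin_sq_add_cos_sq u
    rw [mul_pow, _root_.sq_abs]
    nlinarith [hs, hc]
  have h1 : 0 ≤ ‖Complex.exp (Complex.I * u) - 1‖ := norm_nonneg _
  have h2 : (0:ℝ) ≤ 2 * |Real.sin (u/2)| := by positivity
  nlinarith [h, h1, h2]

-- lower bound for |sin (π w)| when dist of w to ℤ is ≥ δ given by membership
lemma sin_lower (w δ : ℝ) (hδ : 0 < δ) (h1 : δ ≤ |w|) (h2 : |w| ≤ 1 - δ) :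
    2 * δ ≤ |Real.sin (Real.pi * w)| := by
  have hpi := Real.pi_pos
  wlog hw : 0 ≤ w generalizing w
  · have := this (-w) (by rwa [abs_neg]) (by rwa [abs_neg]) (by linarith [abs_nonneg w, le_of_not_ge hw])
    rwa [mul_neg, Real.sin_neg, abs_neg] at this
  rw [_root_.abs_of_nonneg hw] at h1 h2
  -- reduce to w' = min w (1-w) ∈ [δ, 1/2]
  have hδhalf : δ ≤ 1/2 := by linarith
  have key : ∀ v : ℝ, δ ≤ v → v ≤ 1/2 → 2*δ ≤ Real.sin (Real.pi * v) := by
    intro v hv1 hv2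
    have h0 : 0 ≤ Real.pi * v := by nlinarith
    have hh : Real.pi * v ≤ Real.pi / 2 := by nlinarith
    have := Real.mul_le_sin h0 hh
    have h2v : 2 * v ≤ Real.sin (Real.pi * v) := by
      have hπ : 2 / Real.pi * (Real.pi * v) = 2 * v := by
        field_simp
      rwa [hπ] at this
    linarith
  rcases le_or_gt w (1/2) with hle | hgt
  · have := key w h1 hle
    rw [_root_.abs_of_nonneg (Real.sin_nonneg_of_nonneg_of_le_pi (by positivity) (by nlinarith))]
    linarith
  · have h1' : δ ≤ 1 - w := by linarith
    have := key (1-w) h1' (by linarith)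
    have hs : Real.sin (Real.pi * (1 - w)) = Real.sin (Real.pi * w) := by
      rw [mul_sub, mul_one, Real.sin_pi_sub]
    rw [hs] at this
    rw [_root_.abs_of_nonneg (Real.sin_nonneg_of_nonneg_of_le_pi (by positivity) (by nlinarith))]
    linarith

/-- (Temlyakov, inverse theorem) For every d >= 2 and every C_1 > 0 there exists C > 0
such that: if n in N and T ⊆ [0,1)^d is finite and for every s in N_0^d with
s_1 + ... + s_d = n and every f in T(R(s)) one has C_1 ||f||_inf <= max_{x in T} |f(2πx)|,
then disp(T) <= C 2^{-n}. -/
theorem statement16 :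
    ∀ d : ℕ, 2 ≤ d → ∀ C1 : ℝ, 0 < C1 → ∃ C : ℝ, 0 < C ∧
      ∀ n : ℕ, ∀ T : Finset (Fin d → ℝ),
        (∀ t ∈ T, ∀ j, t j ∈ Set.Ico (0 : ℝ) 1) →
        (∀ s : Fin d → ℕ, (∑ j, s j) = n →
          ∀ coef : (Fin d → ℤ) → ℂ,
            C1 * supNorm d (trigPoly d (Rbox d s) coef) ≤
              ⨆ t : T, ‖
                (trigPoly d (Rbox d s) coef (fun j => 2 * Real.pi * (t : Fin d → ℝ) j))‖) →
        disp d ↑T ≤ C / 2 ^ n := by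
  intro d hd C1 hC1
  set K : ℝ := 1 + 1/C1 with hK_def
  have hK1 : 1 < K := by
    rw [hK_def]
    have : 0 < 1/C1 := by positivity
    linarith
  have hK0 : 0 < K := by linarith
  have hKC1 : 1/K < C1 := by
    rw [div_lt_iff₀ hK0]
    have : C1 * K = C1 + 1 := by
      rw [hK_def]
      field_simp
    rw [this]; linarith
  refine ⟨(4*K)^d, by positivity, ?_⟩
  intro n T hT hyp
  unfold disp
  apply Real.sSup_le
  swap
  · positivity
  rintro V ⟨x, y, hbox, havoid, rfl⟩
  by_contra hV
  push_neg at hV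
  set e := fun j => y j - x j with he_def
  have he_nonneg : ∀ j, 0 ≤ e j := fun j => by have := hbox j; simp [he_def]; linarith [this.2.1]
  have hC2n : (0:ℝ) < (4*K)^d / 2^n := by positivity
  have hprod_pos : (0:ℝ) < ∏ j, e j := lt_trans hC2n hV
  have he_pos : ∀ j, 0 < e j := by
    intro j
    rcases lt_or_eq_of_le (he_nonneg j) with h | h
    · exact h
    · exfalso
      have : (∏ i, e i) = 0 := Finset.prod_eq_zero (Finset.mem_univ j) h.symm
      rw [this] at hprod_pos; exact lt_irrefl _ hprod_pos
  have he_le1 : ∀ j, e j ≤ 1 := by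
    intro j; have := hbox j; simp [he_def]; linarith [this.1, this.2.2]
  have hKe : ∀ j, (1:ℝ) ≤ K / e j := by
    intro j
    rw [le_div_iff₀ (he_pos j), one_mul]
    exact le_trans (he_le1 j) hK1.le
  -- choose minimal powers
  have hex : ∀ j, ∃ a : ℕ, K / e j ≤ 2^a ∧ (2:ℝ)^a ≤ 2 * (K / e j) := by
    intro j
    have hexj : ∃ a : ℕ, K / e j ≤ (2:ℝ)^a := by
      obtain ⟨a, ha⟩ := pow_unbounded_of_one_lt (K / e j) (one_lt_two (α := ℝ))
      exact ⟨a, ha.le⟩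
    refine ⟨Nat.find hexj, Nat.find_spec hexj, ?_⟩
    rcases Nat.eq_zero_or_pos (Nat.find hexj) with h0 | hpos
    · rw [h0]; norm_num; linarith [hKe j]
    · have hfail : ¬ (K / e j ≤ (2:ℝ)^(Nat.find hexj - 1)) := Nat.find_min hexj (by omega)
      push_neg at hfail
      have h2 : (2:ℝ)^(Nat.find hexj) = 2 * 2^(Nat.find hexj - 1) := by
        rw [← pow_succ']
        congr 1
        omega
      rw [h2]
      linarith
  choose A hA_lb hA_ub using hex
  -- sum of A is < n
  have hsum_lt : ∑ j, A j < n := by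
    have hpow : (2:ℝ)^(∑ j, A j) < 2^n := by
      have h1 : (2:ℝ)^(∑ j, A j) = ∏ j, (2:ℝ)^(A j) := by
        rw [← Finset.prod_pow_eq_pow_sum]
      have h2 : (∏ j, (2:ℝ)^(A j)) ≤ ∏ j, 2 * (K / e j) := by
        apply Finset.prod_le_prod
        · intro j _; positivity
        · intro j _; exact hA_ub j
      have h3 : (∏ j, 2 * (K / e j)) = (2*K)^d / ∏ j, e j := by
        rw [Finset.prod_mul_distrib, Finset.prod_div_distrib]
        simp [Finset.prod_const, mul_div_assoc]
        rw [mul_pow]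
        ring
      have h4 : (2*K)^d / (∏ j, e j) < (2*K)^d / ((4*K)^d / 2^n) := by
        apply div_lt_div_of_pos_left
        · positivity
        · exact hC2n
        · exact hV
      have h5 : (2*K)^d / ((4*K)^d / 2^n) = 2^n * ((2*K)^d / (4*K)^d) := by
        field_simp
      have h6 : ((2*K):ℝ)^d / (4*K)^d ≤ 1 := by
        rw [div_le_one (by positivity)]
        apply pow_le_pow_left₀ (by positivity) (by linarith)
      calc (2:ℝ)^(∑ j, A j) ≤ (2*K)^d / ∏ j, e j := by rw [h1, ← h3]; exact h2
        _ < (2*K)^d / ((4*K)^d / 2^n) := h4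
        _ = 2^n * ((2*K)^d / (4*K)^d) := h5
        _ ≤ 2^n * 1 := by
            apply mul_le_mul_of_nonneg_left h6 (by positivity)
        _ = 2^n := mul_one _
    exact (pow_lt_pow_iff_right₀ one_lt_two).mp hpow
  -- define s
  set j0 : Fin d := ⟨0, by omega⟩ with hj0_def
  set sfun : Fin d → ℕ := fun j => A j + (if j = j0 then n - ∑ i, A i else 0) with hs_def
  have hs_sum : ∑ j, sfun j = n := by
    rw [hs_def]
    rw [Finset.sum_add_distrib, Finset.sum_ite_eq' Finset.univ j0 (fun _ => n - ∑ i, A i)]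
    simp only [Finset.mem_univ, if_true]
    omega
  have hA_le_s : ∀ j, A j ≤ sfun j := fun j => Nat.le_add_right _ _
  have hs_lb : ∀ j, K / e j ≤ 2^(sfun j) := by
    intro j
    refine le_trans (hA_lb j) ?_
    exact_mod_cast pow_le_pow_right₀ one_le_two (hA_le_s j)
  -- setup kernel
  set c : Fin d → ℝ := fun j => (x j + y j)/2 with hc_def
  set θ : Fin d → ℝ := fun j => 2 * Real.pi * c j with hθ_def
  set coef : (Fin d → ℤ) → ℂ := fun k => ∏ j, Complex.exp (-Complex.I * (k j) * (θ j)) with hcoef_def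
  have hpoly : ∀ z : Fin d → ℝ, trigPoly d (Rbox d sfun) coef z = ∏ j, Dir ((2:ℕ)^(sfun j)) (z j - θ j) :=
    fun z => trigPoly_eq d sfun θ z
  set N : Fin d → ℕ := fun j => (2:ℕ)^(sfun j) with hN_def
  have hN1 : ∀ j, 1 ≤ N j := fun j => Nat.one_le_two_pow
  set P : ℝ := ∏ j, ((2 * N j - 1 : ℕ) : ℝ) with hP_def
  have hfac1 : ∀ j, (1:ℝ) ≤ ((2 * N j - 1 : ℕ) : ℝ) := by
    intro j
    have := hN1 j
    have : 1 ≤ 2 * N j - 1 := by omega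
    exact_mod_cast this
  have hP1 : 1 ≤ P := by
    rw [hP_def]
    calc (1:ℝ) = ∏ _j : Fin d, 1 := by simp
      _ ≤ ∏ j, ((2 * N j - 1 : ℕ) : ℝ) :=
          Finset.prod_le_prod (by intros; norm_num) (fun j _ => hfac1 j)
  have hP0 : 0 < P := lt_of_lt_of_le one_pos hP1
  have hpi := Real.pi_pos
  -- peak point
  have hc_mem : ∀ j, 0 ≤ c j ∧ c j < 1 := by
    intro j
    obtain ⟨h1, h2, h3⟩ := hbox j
    have := he_pos j
    constructor
    · rw [hc_def]; simp only; linarith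
    · rw [hc_def]; simp only
      have : x j < y j := by
        have : 0 < y j - x j := he_pos j
        linarith
      linarith
  have hθ_mem : θ ∈ Set.univ.pi fun _ : Fin d => Set.Ico (0 : ℝ) (2 * Real.pi) := by
    intro j _
    obtain ⟨h1, h2⟩ := hc_mem j
    constructor
    · rw [hθ_def]; simp only; positivity
    · rw [hθ_def]; simp only; nlinarith
  have hpeak : ‖trigPoly d (Rbox d sfun) coef θ‖ = P := by
    rw [hpoly]
    have : ∀ j, Dir ((2:ℕ)^(sfun j)) (θ j - θ j) = ((2 * N j - 1 : ℕ) : ℂ) := by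
      intro j
      rw [sub_self]
      exact dir_zero (N j) (hN1 j)
    rw [Finset.prod_congr rfl (fun j _ => this j), norm_prod, hP_def]
    exact Finset.prod_congr rfl (fun j _ => Complex.norm_natCast _)
  -- supNorm lower bound
  have hBdd : BddAbove (Set.range fun q : ↥(Set.univ.pi fun _ : Fin d => Set.Ico (0 : ℝ) (2 * Real.pi)) =>
      ‖trigPoly d (Rbox d sfun) coef (q : Fin d → ℝ)‖) := by
    refine ⟨∑ k ∈ Rbox d sfun, ‖coef k‖, ?_⟩
    rintro v ⟨q, rfl⟩
    exact trigPoly_abs_le d (Rbox d sfun) coef (q : Fin d → ℝ)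
  have hsup_ge : P ≤ supNorm d (trigPoly d (Rbox d sfun) coef) := by
    unfold supNorm
    rw [← hpeak]
    exact le_ciSup hBdd (⟨θ, hθ_mem⟩ : ↥(Set.univ.pi fun _ : Fin d => Set.Ico (0 : ℝ) (2 * Real.pi)))
  -- bound on T
  have hTbound : ∀ t ∈ T, ‖trigPoly d (Rbox d sfun) coef (fun j => 2 * Real.pi * t j)‖ ≤ P / K := by
    intro t ht
    obtain ⟨j, hj⟩ := havoid t (Finset.mem_coe.mpr ht)
    rw [hpoly, norm_prod]
    set g : Fin d → ℝ := fun i => if i = j then 1 / e j else ((2 * N i - 1 : ℕ) : ℝ) with hg_def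
    have hgj : ‖Dir ((2:ℕ)^(sfun j)) ((2 * Real.pi * t j) - θ j)‖ ≤ 1 / e j := by
      obtain ⟨hx0, hxy, hy1⟩ := hbox j
      obtain ⟨ht0, ht1⟩ := hT t ht j
      have hej := he_pos j
      have hej1 := he_le1 j
      have hejd : e j = y j - x j := by rw [he_def]
      have hcj : c j = x j + e j / 2 := by rw [hc_def, hejd]; ring
      have hcj' : c j = y j - e j / 2 := by rw [hc_def, hejd]; ring
      have habs1 : e j / 2 ≤ |t j - c j| ∧ |t j - c j| ≤ 1 - e j / 2 := by
        rcases hj with h | h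
        · have hwn : t j - c j ≤ 0 := by linarith
          rw [abs_of_nonpos hwn]
          constructor <;> linarith
        · have hwn : 0 ≤ t j - c j := by linarith
          rw [abs_of_nonneg hwn]
          constructor <;> linarith
      have hsin : e j ≤ |Real.sin (Real.pi * (t j - c j))| := by
        have := sin_lower (t j - c j) (e j / 2) (by linarith) habs1.1 habs1.2
        linarith
      have hsin0 : 0 < |Real.sin (Real.pi * (t j - c j))| := lt_of_lt_of_le hej hsin
      have harg : (2 * Real.pi * t j - θ j) / 2 = Real.pi * (t j - c j) := by
        rw [hθ_def]; ring
      have hexp_ne : Complex.exp (Complex.I * ((2 * Real.pi * t j - θ j : ℝ) : ℂ)) ≠ 1 := by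
        intro hcontra
        have h0 := abs_exp_sub_one (2 * Real.pi * t j - θ j)
        rw [hcontra, sub_self, norm_zero, harg] at h0
        have : (0:ℝ) < 2 * |Real.sin (Real.pi * (t j - c j))| := by linarith
        rw [← h0] at this
        exact lt_irrefl _ this
      have hdec := dir_decay (N j) (2 * Real.pi * t j - θ j) hexp_ne
      rw [abs_exp_sub_one, harg] at hdec
      refine le_trans hdec ?_
      rw [show (2:ℝ) / (2 * |Real.sin (Real.pi * (t j - c j))|) = 1 / |Real.sin (Real.pi * (t j - c j))| by
        field_simp]
      exact one_div_le_one_div_of_le hej hsin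
    have hprod_le : (∏ i, ‖Dir ((2:ℕ)^(sfun i)) ((2 * Real.pi * t i) - θ i)‖) ≤ ∏ i, g i := by
      apply Finset.prod_le_prod
      · intro i _; exact norm_nonneg _
      · intro i _
        by_cases hij : i = j
        · subst hij
          simp only [hg_def, if_pos rfl]
          exact hgj
        · simp only [hg_def, if_neg hij]
          exact dir_abs_le (N i) (hN1 i) _
    have hgprod : ∏ i, g i = (1 / e j) * (P / ((2 * N j - 1 : ℕ) : ℝ)) := by
      rw [← Finset.mul_prod_erase Finset.univ g (Finset.mem_univ j)]
      have h1 : g j = 1 / e j := by rw [hg_def]; simp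
      have h2 : ∏ i ∈ Finset.univ.erase j, g i = ∏ i ∈ Finset.univ.erase j, ((2 * N i - 1 : ℕ) : ℝ) := by
        apply Finset.prod_congr rfl
        intro i hi
        simp only [hg_def, if_neg (Finset.ne_of_mem_erase hi)]
      have h3 : P = ((2 * N j - 1 : ℕ) : ℝ) * ∏ i ∈ Finset.univ.erase j, ((2 * N i - 1 : ℕ) : ℝ) := by
        rw [hP_def, ← Finset.mul_prod_erase Finset.univ _ (Finset.mem_univ j)]
      have hfj : ((2 * N j - 1 : ℕ) : ℝ) ≠ 0 := by
        have := hfac1 j; linarith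
      rw [h1, h2, h3, mul_div_cancel_left₀ _ hfj]
    have hK_le : K ≤ e j * ((2 * N j - 1 : ℕ) : ℝ) := by
      have h1 : K ≤ e j * ((N j : ℕ) : ℝ) := by
        have := hs_lb j
        have hcast : ((N j : ℕ) : ℝ) = (2:ℝ)^(sfun j) := by
          rw [hN_def]; push_cast; ring
        rw [hcast]
        rw [div_le_iff₀ (he_pos j)] at this
        linarith
      have h2 : ((N j : ℕ) : ℝ) ≤ ((2 * N j - 1 : ℕ) : ℝ) := by
        have := hN1 j
        have : N j ≤ 2 * N j - 1 := by omega
        exact_mod_cast this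
      nlinarith [he_pos j, he_le1 j]
    calc (∏ i, ‖Dir ((2:ℕ)^(sfun i)) ((2 * Real.pi * t i) - θ i)‖)
        ≤ ∏ i, g i := hprod_le
      _ = (1 / e j) * (P / ((2 * N j - 1 : ℕ) : ℝ)) := hgprod
      _ = P / (e j * ((2 * N j - 1 : ℕ) : ℝ)) := by
          rw [div_mul_div_comm, one_mul]
      _ ≤ P / K := by
          apply div_le_div_of_nonneg_left hP0.le hK0 hK_le
  -- conclude
  have hhyp := hyp sfun hs_sum coef
  have hsupT : (⨆ t : T, ‖trigPoly d (Rbox d sfun) coef (fun j => 2 * Real.pi * (t : Fin d → ℝ) j)‖) ≤ P / K := by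
    rcases T.eq_empty_or_nonempty with hTe | hTne
    · subst hTe
      rw [Real.iSup_of_isEmpty]
      positivity
    · haveI : Nonempty ↥T := Finset.nonempty_coe_sort.mpr hTne
      exact ciSup_le (fun t => hTbound t t.2)
  have hfin1 : C1 * P ≤ C1 * supNorm d (trigPoly d (Rbox d sfun) coef) :=
    mul_le_mul_of_nonneg_left hsup_ge hC1.le
  have hfin2 : P / K < C1 * P := by
    have h := mul_lt_mul_of_pos_left hKC1 hP0
    rw [mul_one_div] at h
    linarith
  linarith [hhyp, hsupT, hfin1, hfin2]
end
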